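/- Let δ ≠ id be a permutation and let k be a positive integer with k ≥ d₂(δ). Suppose ρ = δ t_{ab} for some a ≤ k < b with ℓ(ρ) = ℓ(δ) + 1. Then d₂(ρ) ≤ k. -/

import Mathlib

/-- A permutation of the positive integers, modeled as a permutation of `ℕ`
fixing `0` (and, separately assumed, all but finitely many points). -/
def FinPerm (w : Equiv.Perm ℕ) : Prop :=
  w 0 = 0 ∧ {i : ℕ | w i ≠ i}.Finite

/-- The length `ℓ(w)`: the number of inversions, i.e. pairs `i < j` with `w i > w j`. -/
noncomputable def len (w : Equiv.Perm ℕ) : ℕ :=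
  {p : ℕ × ℕ | p.1 < p.2 ∧ w p.2 < w p.1}.ncard

/-- The set of descents: positions `i ≥ 1` with `w i > w (i+1)`. -/
def descents (w : Equiv.Perm ℕ) : Set ℕ :=
  {i : ℕ | 0 < i ∧ w (i + 1) < w i}

/-- `d₁(w)`: the first (smallest) descent of `w`. -/
noncomputable def d1 (w : Equiv.Perm ℕ) : ℕ := sInf (descents w)

/-- `d₂(w)`: the last (largest) descent of `w`. -/
noncomputable def d2 (w : Equiv.Perm ℕ) : ℕ := sSup (descents w)

/-- `kCover k ρ π` means `ρ ⋖_k π`:  `π = ρ t_{a b}` for some positive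
`a ≤ k < b`, with `ℓ(π) = ℓ(ρ) + 1`. -/
def kCover (k : ℕ) (ρ π : Equiv.Perm ℕ) : Prop :=
  ∃ a b : ℕ, 0 < a ∧ a ≤ k ∧ k < b ∧ π = ρ * Equiv.swap a b ∧ len π = len ρ + 1



def invSet (w : Equiv.Perm ℕ) : Set (ℕ × ℕ) := {p : ℕ × ℕ | p.1 < p.2 ∧ w p.2 < w p.1}

lemma swap_lt_swap_iff {a b : ℕ} (hab : a < b) {i j : ℕ} (hij : i < j) :
    Equiv.swap a b j < Equiv.swap a b i ↔ (i = a ∧ j ≤ b) ∨ (j = b ∧ a ≤ i) := by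
  rw [Equiv.swap_apply_def, Equiv.swap_apply_def]
  split_ifs <;> omega

lemma invSet_finite {w : Equiv.Perm ℕ} (h : {i : ℕ | w i ≠ i}.Finite) :
    (invSet w).Finite := by
  obtain ⟨N, hN⟩ := h.bddAbove
  have hfix : ∀ i, N < i → w i = i := by
    intro i hi
    by_contra hc
    exact absurd (hN hc) (by omega)
  apply Set.Finite.subset ((Set.finite_Iic N).prod (Set.finite_Iic N))
  rintro ⟨i, j⟩ ⟨hij, hw⟩
  change i < j at hij
  change w j < w i at hw
  simp only [Set.mem_prod, Set.mem_Iic]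
  have hj : j ≤ N := by
    by_contra hj
    push_neg at hj
    have h1 : w j = j := hfix j hj
    have h2 : N < w i := by omega
    have h3 : w (w i) = w i := hfix _ h2
    have h4 : w i = i := w.injective h3
    omega
  exact ⟨by omega, hj⟩

noncomputable def phiAux (a b : ℕ) (p : ℕ × ℕ) : ℕ × ℕ :=
  if Equiv.swap a b p.1 < Equiv.swap a b p.2 then (Equiv.swap a b p.1, Equiv.swap a b p.2)
  else (Equiv.swap a b p.2, Equiv.swap a b p.1)

lemma phiAux_invol {a b : ℕ} {p : ℕ × ℕ} (hp : p.1 < p.2) :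
    phiAux a b (phiAux a b p) = p := by
  unfold phiAux
  by_cases h : Equiv.swap a b p.1 < Equiv.swap a b p.2
  · simp only [if_pos h, Equiv.swap_apply_self]
    rw [if_pos hp]
  · simp only [if_neg h, Equiv.swap_apply_self]
    rw [if_neg (by omega : ¬ p.2 < p.1)]

lemma key (δ : Equiv.Perm ℕ) (hfin : {i : ℕ | δ i ≠ i}.Finite) {a b : ℕ} (hab : a < b)
    (hlen : len (δ * Equiv.swap a b) = len δ + 1) :
    δ a < δ b ∧ ∀ c, a < c → c < b → ¬(δ a < δ c ∧ δ c < δ b) := by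
  set s := Equiv.swap a b with hs
  have hsself : ∀ x, s (s x) = x := fun x => Equiv.swap_apply_self a b x
  have hsne : ∀ {i j : ℕ}, i ≠ j → s i ≠ s j := fun hij hc => hij (s.injective hc)
  have hδne : ∀ {i j : ℕ}, i ≠ j → δ i ≠ δ j := fun hij hc => hij (δ.injective hc)
  set Iδ := invSet δ with hIδ
  set Iρ := invSet (δ * s) with hIρ
  set F : Set (ℕ × ℕ) := {p : ℕ × ℕ | p.1 < p.2 ∧ s p.2 < s p.1} with hF
  have hmemIδ : ∀ p : ℕ × ℕ, p ∈ Iδ ↔ p.1 < p.2 ∧ δ p.2 < δ p.1 := fun p => Iff.rfl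
  have hmemIρ : ∀ p : ℕ × ℕ, p ∈ Iρ ↔ p.1 < p.2 ∧ δ (s p.2) < δ (s p.1) := fun p => Iff.rfl
  have hmemF : ∀ p : ℕ × ℕ, p ∈ F ↔ p.1 < p.2 ∧ ((p.1 = a ∧ p.2 ≤ b) ∨ (p.2 = b ∧ a ≤ p.1)) := by
    intro p
    constructor
    · rintro ⟨h1, h2⟩
      exact ⟨h1, (swap_lt_swap_iff hab h1).1 h2⟩
    · rintro ⟨h1, h2⟩
      exact ⟨h1, (swap_lt_swap_iff hab h1).2 h2⟩
  -- finiteness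
  have hfinIδ : Iδ.Finite := invSet_finite hfin
  have hfinρsupp : {i : ℕ | (δ * s) i ≠ i}.Finite := by
    apply Set.Finite.subset (hfin.union ((Set.finite_singleton b).insert a))
    intro i hi
    simp only [Set.mem_setOf_eq, Equiv.Perm.mul_apply] at hi
    simp only [Set.mem_union, Set.mem_insert_iff, Set.mem_singleton_iff, Set.mem_setOf_eq]
    by_cases hia : i = a
    · exact Or.inr (Or.inl hia)
    · by_cases hib : i = b
      · exact Or.inr (Or.inr hib)
      · rw [Equiv.swap_apply_of_ne_of_ne hia hib] at hi
        exact Or.inl hi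
  have hfinIρ : Iρ.Finite := invSet_finite hfinρsupp
  have hfinF : F.Finite := by
    apply Set.Finite.subset ((Set.finite_Iic b).prod (Set.finite_Iic b))
    intro p hp
    obtain ⟨h1, h2⟩ := (hmemF p).1 hp
    simp only [Set.mem_prod, Set.mem_Iic]
    omega
  -- phi image facts
  have hφF : phiAux a b '' (Iρ ∩ F) = F \ Iδ := by
    apply Set.Subset.antisymm
    · rintro q ⟨p, ⟨hpI, hpF⟩, rfl⟩
      obtain ⟨hp12, hpinv⟩ := (hmemIρ p).1 hpI
      obtain ⟨_, hflip⟩ := hpF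
      have hφ : phiAux a b p = (s p.2, s p.1) := if_neg (by simp only [← hs]; omega)
      rw [hφ]
      constructor
      · refine ⟨hflip, ?_⟩
        show s (s p.1) < s (s p.2)
        rw [hsself, hsself]
        exact hp12
      · rintro ⟨-, hlt⟩
        simp only at hlt
        omega
    · rintro q ⟨hqF, hqnI⟩
      obtain ⟨hq12, hqflip⟩ := hqF
      have hqnlt : ¬ δ q.2 < δ q.1 := fun hc => hqnI ⟨hq12, hc⟩
      have hqlt : δ q.1 < δ q.2 := by
        have := hδne (show q.1 ≠ q.2 by omega)
        omega
      refine ⟨(s q.2, s q.1), ⟨?_, ?_⟩, ?_⟩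
      · refine (hmemIρ _).2 ⟨hqflip, ?_⟩
        simp only
        rw [hsself, hsself]
        exact hqlt
      · refine ⟨hqflip, ?_⟩
        show s (s q.1) < s (s q.2)
        rw [hsself, hsself]
        exact hq12
      · have : phiAux a b q = (s q.2, s q.1) := if_neg (by simp only [← hs]; omega)
        rw [← this, phiAux_invol hq12]
  have hφnF : phiAux a b '' (Iρ \ F) = Iδ \ F := by
    apply Set.Subset.antisymm
    · rintro q ⟨p, ⟨hpI, hpnF⟩, rfl⟩
      obtain ⟨hp12, hpinv⟩ := (hmemIρ p).1 hpI
      have hnflip : ¬ s p.2 < s p.1 := fun hc => hpnF ⟨hp12, hc⟩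
      have hslt : s p.1 < s p.2 := by
        have := hsne (show p.1 ≠ p.2 by omega)
        omega
      have hφ : phiAux a b p = (s p.1, s p.2) := if_pos hslt
      rw [hφ]
      constructor
      · exact ⟨hslt, hpinv⟩
      · rintro ⟨-, hc⟩
        simp only at hc
        rw [hsself, hsself] at hc
        omega
    · rintro q ⟨hqI, hqnF⟩
      obtain ⟨hq12, hqinv⟩ := (hmemIδ q).1 hqI
      have hnflip : ¬ s q.2 < s q.1 := fun hc => hqnF ⟨hq12, hc⟩
      have hslt : s q.1 < s q.2 := by
        have := hsne (show q.1 ≠ q.2 by omega)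
        omega
      refine ⟨(s q.1, s q.2), ⟨?_, ?_⟩, ?_⟩
      · refine (hmemIρ _).2 ⟨hslt, ?_⟩
        simp only
        rw [hsself, hsself]
        exact hqinv
      · rintro ⟨-, hc⟩
        simp only at hc
        rw [hsself, hsself] at hc
        omega
      · have : phiAux a b q = (s q.1, s q.2) := if_pos hslt
        rw [← this, phiAux_invol hq12]
  have hinjP : Set.InjOn (phiAux a b) {p : ℕ × ℕ | p.1 < p.2} := by
    intro p hp q hq h
    rw [← phiAux_invol hp, h, phiAux_invol hq]
  have hsubρF : Iρ ∩ F ⊆ {p : ℕ × ℕ | p.1 < p.2} := fun p hp => ((hmemIρ p).1 hp.1).1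
  have hsubρnF : Iρ \ F ⊆ {p : ℕ × ℕ | p.1 < p.2} := fun p hp => ((hmemIρ p).1 hp.1).1
  have n3 : (Iρ ∩ F).ncard = (F \ Iδ).ncard := by
    rw [← hφF, Set.ncard_image_of_injOn (hinjP.mono hsubρF)]
  have n4 : (Iρ \ F).ncard = (Iδ \ F).ncard := by
    rw [← hφnF, Set.ncard_image_of_injOn (hinjP.mono hsubρnF)]
  have E1 : (Iδ ∩ F).ncard + (Iδ \ F).ncard = len δ :=
    Set.ncard_inter_add_ncard_diff_eq_ncard Iδ F hfinIδ
  have E2 : (Iρ ∩ F).ncard + (Iρ \ F).ncard = len (δ * s) :=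
    Set.ncard_inter_add_ncard_diff_eq_ncard Iρ F hfinIρ
  have hkey : (F \ Iδ).ncard = (Iδ ∩ F).ncard + 1 := by omega
  -- part 1 : δ a < δ b
  have habmemF : (a, b) ∈ F := (hmemF _).2 ⟨hab, Or.inl ⟨rfl, le_refl b⟩⟩
  have hA : δ a < δ b := by
    by_contra hc
    have hba : δ b < δ a := by
      have := hδne (show a ≠ b by omega)
      omega
    set ψ : ℕ × ℕ → ℕ × ℕ := fun p => if p.1 = a then (p.2, b) else (a, p.1) with hψ
    have hmaps : ∀ p ∈ F \ Iδ, ψ p ∈ (Iδ ∩ F) \ {(a, b)} := by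
      rintro p ⟨hpF, hpnI⟩
      obtain ⟨hp12, hchar⟩ := (hmemF p).1 hpF
      have hpnlt : ¬ δ p.2 < δ p.1 := fun hcc => hpnI ⟨hp12, hcc⟩
      have hplt : δ p.1 < δ p.2 := by
        have := hδne (show p.1 ≠ p.2 by omega)
        omega
      by_cases h1 : p.1 = a
      · have hp2b : p.2 ≤ b := by
          rcases hchar with ⟨_, h⟩ | ⟨h, _⟩ <;> omega
        have hδp2 : δ a < δ p.2 := h1 ▸ hplt
        have hp2ltb : p.2 < b := by
          rcases eq_or_lt_of_le hp2b with h | h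
          · exfalso; rw [h] at hδp2; omega
          · exact h
        have : ψ p = (p.2, b) := if_pos h1
        rw [this]
        refine ⟨⟨(hmemIδ _).2 ⟨hp2ltb, by simp only; omega⟩, (hmemF _).2 ⟨hp2ltb, Or.inr ⟨rfl, by omega⟩⟩⟩, ?_⟩
        simp only [Set.mem_singleton_iff, Prod.mk.injEq]
        omega
      · have hp2b : p.2 = b := by
          rcases hchar with ⟨h, _⟩ | ⟨h, _⟩
          · omega
          · exact h
        have hap1 : a < p.1 := by
          rcases hchar with ⟨h, _⟩ | ⟨_, h⟩ <;> omega
        have hδp1 : δ p.1 < δ b := hp2b ▸ hplt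
        have : ψ p = (a, p.1) := if_neg h1
        rw [this]
        refine ⟨⟨(hmemIδ _).2 ⟨hap1, by simp only; omega⟩, (hmemF _).2 ⟨hap1, Or.inl ⟨rfl, by omega⟩⟩⟩, ?_⟩
        simp only [Set.mem_singleton_iff, Prod.mk.injEq]
        omega
    have hinjψ : Set.InjOn ψ (F \ Iδ) := by
      rintro p ⟨hpF, -⟩ q ⟨hqF, -⟩ h
      obtain ⟨hp12, hpchar⟩ := (hmemF p).1 hpF
      obtain ⟨hq12, hqchar⟩ := (hmemF q).1 hqF
      by_cases h1 : p.1 = a <;> by_cases h2 : q.1 = a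
      · rw [hψ] at h; simp only [if_pos h1, if_pos h2, Prod.mk.injEq] at h
        exact Prod.ext (by omega) h.1
      · rw [hψ] at h; simp only [if_pos h1, if_neg h2, Prod.mk.injEq] at h
        omega
      · rw [hψ] at h; simp only [if_neg h1, if_pos h2, Prod.mk.injEq] at h
        omega
      · rw [hψ] at h; simp only [if_neg h1, if_neg h2, Prod.mk.injEq] at h
        have hp2 : p.2 = b := by rcases hpchar with ⟨hh, _⟩ | ⟨hh, _⟩ <;> omega
        have hq2 : q.2 = b := by rcases hqchar with ⟨hh, _⟩ | ⟨hh, _⟩ <;> omega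
        exact Prod.ext h.2 (by omega)
    have hle : (F \ Iδ).ncard ≤ ((Iδ ∩ F) \ {(a, b)}).ncard :=
      Set.ncard_le_ncard_of_injOn ψ hmaps hinjψ
        (hfinF.inter_of_right Iδ).diff
    have hmem : (a, b) ∈ Iδ ∩ F := ⟨(hmemIδ _).2 ⟨hab, hba⟩, habmemF⟩
    have hlt : ((Iδ ∩ F) \ {(a, b)}).ncard < (Iδ ∩ F).ncard :=
      Set.ncard_diff_singleton_lt_of_mem hmem (hfinF.inter_of_right Iδ)
    omega
  refine ⟨hA, ?_⟩
  -- part 2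
  rintro c hac hcb ⟨h1, h2⟩
  set ψ : ℕ × ℕ → ℕ × ℕ := fun p => if p.1 = a then (p.2, b) else (a, p.1) with hψ
  set e : Set (ℕ × ℕ) := {(a, b), (a, c), (c, b)} with he
  have hesub : e ⊆ F \ Iδ := by
    rintro p hp
    rcases hp with h | h | h <;> subst h
    · exact ⟨habmemF, fun hc => by have := ((hmemIδ _).1 hc).2; simp only at this; omega⟩
    · refine ⟨(hmemF _).2 ⟨hac, Or.inl ⟨rfl, by omega⟩⟩, fun hc => ?_⟩
      have := ((hmemIδ _).1 hc).2; simp only at this; omega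
    · refine ⟨(hmemF _).2 ⟨hcb, Or.inr ⟨rfl, by omega⟩⟩, fun hc => ?_⟩
      have := ((hmemIδ _).1 hc).2; simp only at this; omega
  have hmaps : ∀ p ∈ Iδ ∩ F, ψ p ∈ (F \ Iδ) \ e := by
    rintro p ⟨hpI, hpF⟩
    obtain ⟨hp12, hpinv⟩ := (hmemIδ p).1 hpI
    obtain ⟨-, hchar⟩ := (hmemF p).1 hpF
    by_cases hh : p.1 = a
    · have hp2b : p.2 ≤ b := by rcases hchar with ⟨_, h⟩ | ⟨h, _⟩ <;> omega
      have hδp2 : δ p.2 < δ a := hh ▸ hpinv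
      have hp2neb : p.2 ≠ b := fun hc => by rw [hc] at hδp2; omega
      have hp2nec : p.2 ≠ c := fun hc => by rw [hc] at hδp2; omega
      have : ψ p = (p.2, b) := if_pos hh
      rw [this]
      refine ⟨⟨(hmemF _).2 ⟨by omega, Or.inr ⟨rfl, by omega⟩⟩, fun hc => ?_⟩, ?_⟩
      · have := ((hmemIδ _).1 hc).2; simp only at this; omega
      · rw [he]
        simp only [Set.mem_insert_iff, Set.mem_singleton_iff, Prod.mk.injEq]
        omega
    · have hp2b : p.2 = b := by rcases hchar with ⟨h, _⟩ | ⟨h, _⟩ <;> omega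
      have hap1 : a < p.1 := by rcases hchar with ⟨h, _⟩ | ⟨_, h⟩ <;> omega
      have hδp1 : δ b < δ p.1 := hp2b ▸ hpinv
      have hp1nec : p.1 ≠ c := fun hc => by rw [hc] at hδp1; omega
      have : ψ p = (a, p.1) := if_neg hh
      rw [this]
      refine ⟨⟨(hmemF _).2 ⟨hap1, Or.inl ⟨rfl, by omega⟩⟩, fun hc => ?_⟩, ?_⟩
      · have := ((hmemIδ _).1 hc).2; simp only at this; omega
      · rw [he]
        simp only [Set.mem_insert_iff, Set.mem_singleton_iff, Prod.mk.injEq]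
        omega
  have hinjψ : Set.InjOn ψ (Iδ ∩ F) := by
    rintro p ⟨-, hpF⟩ q ⟨-, hqF⟩ h
    obtain ⟨hp12, hpchar⟩ := (hmemF p).1 hpF
    obtain ⟨hq12, hqchar⟩ := (hmemF q).1 hqF
    by_cases h1 : p.1 = a <;> by_cases h2 : q.1 = a
    · rw [hψ] at h; simp only [if_pos h1, if_pos h2, Prod.mk.injEq] at h
      exact Prod.ext (by omega) h.1
    · rw [hψ] at h; simp only [if_pos h1, if_neg h2, Prod.mk.injEq] at h
      omega
    · rw [hψ] at h; simp only [if_neg h1, if_pos h2, Prod.mk.injEq] at h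
      omega
    · rw [hψ] at h; simp only [if_neg h1, if_neg h2, Prod.mk.injEq] at h
      have hp2 : p.2 = b := by rcases hpchar with ⟨hh, _⟩ | ⟨hh, _⟩ <;> omega
      have hq2 : q.2 = b := by rcases hqchar with ⟨hh, _⟩ | ⟨hh, _⟩ <;> omega
      exact Prod.ext h.2 (by omega)
  have hfinFd : (F \ Iδ).Finite := hfinF.diff
  have hle : (Iδ ∩ F).ncard ≤ ((F \ Iδ) \ e).ncard :=
    Set.ncard_le_ncard_of_injOn ψ hmaps hinjψ hfinFd.diff
  have hecard : e.ncard = 3 := by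
    rw [he]
    rw [Set.ncard_insert_of_notMem (by simp only [Set.mem_insert_iff, Set.mem_singleton_iff, Prod.mk.injEq]; omega) ((Set.finite_singleton _).insert _)]
    rw [Set.ncard_insert_of_notMem (by simp only [Set.mem_singleton_iff, Prod.mk.injEq]; omega) (Set.finite_singleton _)]
    rw [Set.ncard_singleton]
  have hediff : ((F \ Iδ) \ e).ncard = (F \ Iδ).ncard - 3 := by
    rw [Set.ncard_diff hesub (hfinFd.subset hesub), hecard]
  have hele : 3 ≤ (F \ Iδ).ncard := by
    rw [← hecard]
    exact Set.ncard_le_ncard hesub hfinFd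
  omega

lemma descents_bddAbove {w : Equiv.Perm ℕ} (h : {i : ℕ | w i ≠ i}.Finite) :
    BddAbove (descents w) := by
  obtain ⟨N, hN⟩ := h.bddAbove
  have hfix : ∀ i, N < i → w i = i := by
    intro i hi
    by_contra hc
    exact absurd (hN hc) (by omega)
  refine ⟨N, fun i hi => ?_⟩
  obtain ⟨h0, hd⟩ := hi
  by_contra hc
  push_neg at hc
  rw [hfix i (by omega), hfix (i+1) (by omega)] at hd
  omega

theorem stmt6 (δ : Equiv.Perm ℕ) (hδ : FinPerm δ) (hne : δ ≠ 1)
    (k : ℕ) (hk : 0 < k) (hkd : d2 δ ≤ k)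
    (ρ : Equiv.Perm ℕ) (a b : ℕ) (ha : 0 < a) (hak : a ≤ k) (hkb : k < b)
    (hρ : ρ = δ * Equiv.swap a b) (hlen : len ρ = len δ + 1) :
    d2 ρ ≤ k := by
  subst hρ
  have hab : a < b := lt_of_le_of_lt hak hkb
  have hfin := hδ.2
  obtain ⟨hA, hB⟩ := key δ hfin hab hlen
  have hbdd : BddAbove (descents δ) := descents_bddAbove hfin
  have hno : ∀ i, k < i → δ i < δ (i + 1) := by
    intro i hi
    have hnotin : i ∉ descents δ := by
      intro hmem
      have : i ≤ d2 δ := le_csSup hbdd hmem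
      omega
    have hnd : ¬ δ (i + 1) < δ i := fun hc => hnotin ⟨by omega, hc⟩
    have : δ i ≠ δ (i + 1) := fun hc => by have := δ.injective hc; omega
    omega
  have hall : ∀ i ∈ descents (δ * Equiv.swap a b), i ≤ k := by
    rintro i ⟨hi0, hdesc⟩
    by_contra hik
    push_neg at hik
    simp only [Equiv.Perm.mul_apply] at hdesc
    have hia : i ≠ a := by omega
    have hi1a : i + 1 ≠ a := by omega
    by_cases hib : i = b
    · have h1 : Equiv.swap a b i = a := by rw [hib, Equiv.swap_apply_right]
      have h2 : Equiv.swap a b (i + 1) = i + 1 := Equiv.swap_apply_of_ne_of_ne hi1a (by omega)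
      rw [h1, h2] at hdesc
      have h3 := hno i hik
      have h4 : δ a < δ i := hib ▸ hA
      omega
    · by_cases hi1b : i + 1 = b
      · have h1 : Equiv.swap a b i = i := Equiv.swap_apply_of_ne_of_ne hia hib
        have h2 : Equiv.swap a b (i + 1) = a := by rw [hi1b, Equiv.swap_apply_right]
        rw [h1, h2] at hdesc
        have h3 : δ i < δ b := by
          have := hno i hik
          rwa [hi1b] at this
        exact hB i (by omega) (by omega) ⟨hdesc, h3⟩
      · have h1 : Equiv.swap a b i = i := Equiv.swap_apply_of_ne_of_ne hia hib
        have h2 : Equiv.swap a b (i + 1) = i + 1 := Equiv.swap_apply_of_ne_of_ne hi1a hi1b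
        rw [h1, h2] at hdesc
        have := hno i hik
        omega
  rcases Set.eq_empty_or_nonempty (descents (δ * Equiv.swap a b)) with h | h
  · show sSup (descents (δ * Equiv.swap a b)) ≤ k
    rw [h, csSup_empty]
    exact Nat.zero_le k
  · exact csSup_le h hall
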